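/- A set X of vertices of T is the support of some minimal deviation of T if and only if the following four conditions hold: (i) n ∈ X; (ii) every vertex of X other than n has its parent in X; (iii) every variable node belonging to X has all of its child check nodes in X; (iv) every check node belonging to X has exactly one of its child variable nodes in X. -/
import Mathlib


open SimpleGraph Finset

/-- In the tree `T` rooted at `n`, `v` is a child of `u`. -/
def IsChild {V : Type} (T : SimpleGraph V) (n u v : V) : Prop :=
  T.Adj u v ∧ T.dist v n = T.dist u n + 1

/-- A `T`-codeword: a map on the variable nodes `P` (encoded as a map on all vertices
vanishing off `P`) such that, at every check node, the sum of the values of its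
variable neighbors is `0` in `ZMod 2`. -/
def IsCodeword {V : Type} (T : SimpleGraph V) [Fintype V] [DecidableRel T.Adj]
    (P : Set V) (x : V → ZMod 2) : Prop :=
  (∀ v, v ∉ P → x v = 0) ∧
  ∀ q, q ∉ P → ∑ p ∈ T.neighborFinset q, x p = 0

/-- `x` covers `y` : every variable node where `y` is `1` also has `x` equal to `1`. -/
def Covers {V : Type} (P : Set V) (x y : V → ZMod 2) : Prop :=
  ∀ p ∈ P, y p = 1 → x p = 1

/-- A minimal deviation: a `T`-codeword `x` with `x n = 1` such that the only nonzero
`T`-codeword covered by `x` is `x` itself. -/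
def IsMinimalDeviation {V : Type} (T : SimpleGraph V) [Fintype V] [DecidableRel T.Adj]
    (P : Set V) (n : V) (x : V → ZMod 2) : Prop :=
  IsCodeword T P x ∧ x n = 1 ∧
  ∀ y, IsCodeword T P y → Covers P x y → y ≠ 0 → y = x

/-- The support of a `T`-codeword `x`: the variable nodes `p` with `x p = 1` together
with all check nodes adjacent to at least one such variable node. -/
def Support {V : Type} (T : SimpleGraph V) (P : Set V) (x : V → ZMod 2) : Set V :=
  {v | (v ∈ P ∧ x v = 1) ∨ (v ∉ P ∧ ∃ p ∈ P, T.Adj v p ∧ x p = 1)}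

lemma zmod2_cases (a : ZMod 2) : a = 0 ∨ a = 1 := by revert a; decide

lemma dist_le_of_mem_support {V : Type} (T : SimpleGraph V) {n v z : V}
    (p : T.Walk v n) (hz : z ∈ p.support) : T.dist z n ≤ p.length := by
  classical
  exact le_trans (T.dist_le (p.dropUntil z hz)) (p.length_dropUntil_le hz)

lemma exists_parent {V : Type} (T : SimpleGraph V) {n : V} (hc : T.Connected)
    {v : V} (hv : v ≠ n) : ∃ u, T.Adj u v ∧ T.dist u n + 1 = T.dist v n := by
  obtain ⟨p, hp⟩ := hc.exists_walk_length_eq_dist v n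
  cases p with
  | nil => exact absurd rfl hv
  | @cons _ u' _ h q =>
    rw [Walk.length_cons] at hp
    have h1 : T.dist u' n ≤ q.length := T.dist_le q
    have h2 := hc.dist_triangle (u := v) (v := u') (w := n)
    have h3 : T.dist v u' = 1 := dist_eq_one_iff_adj.mpr h
    exact ⟨u', h.symm, by omega⟩

lemma parent_unique {V : Type} (T : SimpleGraph V) {n : V} (hT : T.IsTree)
    {v u₁ u₂ : V} (h₁ : T.Adj u₁ v) (hd₁ : T.dist u₁ n + 1 = T.dist v n)
    (h₂ : T.Adj u₂ v) (hd₂ : T.dist u₂ n + 1 = T.dist v n) : u₁ = u₂ := by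
  obtain ⟨p₁, hp₁, hl₁⟩ := hT.isConnected.exists_path_of_dist u₁ n
  obtain ⟨p₂, hp₂, hl₂⟩ := hT.isConnected.exists_path_of_dist u₂ n
  have hv1 : v ∉ p₁.support := fun hz => by
    have := dist_le_of_mem_support T p₁ hz; omega
  have hv2 : v ∉ p₂.support := fun hz => by
    have := dist_le_of_mem_support T p₂ hz; omega
  obtain ⟨w, -, hw⟩ := hT.existsUnique_path v n
  have heq := (hw _ (hp₁.cons hv1 (h := h₁.symm))).trans (hw _ (hp₂.cons hv2 (h := h₂.symm))).symm
  have hs := congrArg Walk.support heq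
  rw [Walk.support_cons, Walk.support_cons, p₁.support_eq_cons, p₂.support_eq_cons] at hs
  simp only [List.cons.injEq] at hs
  exact hs.2.1

lemma mem_P_iff_even {V : Type} (T : SimpleGraph V) (hc : T.Connected)
    {P : Set V} (hbip : ∀ u v, T.Adj u v → (u ∈ P ↔ v ∉ P)) {n : V} (hn : n ∈ P)
    (v : V) : v ∈ P ↔ Even (T.dist v n) := by
  suffices H : ∀ k v, T.dist v n = k → (v ∈ P ↔ Even k) from
    (H _ v rfl).trans (by rfl)
  intro k
  induction k using Nat.strong_induction_on with
  | _ k IH =>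
    intro v hk
    by_cases hv : v = n
    · subst hv
      rw [T.dist_self] at hk
      subst hk
      simp [hn]
    · obtain ⟨u, hadj, hd⟩ := exists_parent T hc hv
      have hu := IH (T.dist u n) (by omega) u rfl
      have hb := hbip u v hadj
      have hk' : k = T.dist u n + 1 := by omega
      subst hk'
      rw [Nat.even_add_one, ← hu]
      tauto

lemma adj_dist {V : Type} (T : SimpleGraph V) (hc : T.Connected)
    {P : Set V} (hbip : ∀ u v, T.Adj u v → (u ∈ P ↔ v ∉ P)) {n : V} (hn : n ∈ P)
    {u v : V} (h : T.Adj u v) :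
    T.dist u n + 1 = T.dist v n ∨ T.dist v n + 1 = T.dist u n := by
  have h1 := hc.dist_triangle (u := u) (v := v) (w := n)
  have h2 := hc.dist_triangle (u := v) (v := u) (w := n)
  have h3 : T.dist u v = 1 := dist_eq_one_iff_adj.mpr h
  have h4 : T.dist v u = 1 := dist_eq_one_iff_adj.mpr h.symm
  have h5 : ¬ (T.dist u n = T.dist v n) := by
    intro he
    have e1 := mem_P_iff_even T hc hbip hn u
    have e2 := mem_P_iff_even T hc hbip hn v
    have := hbip u v h
    rw [he] at e1
    tauto
  omega

lemma onP_iff_mem {V : Type} (T : SimpleGraph V) (hT : T.IsTree) {n v : V}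
    (p : T.Walk v n) (hp : p.length = T.dist v n) (c : V) :
    T.dist v c + T.dist c n = T.dist v n ↔ c ∈ p.support := by
  constructor
  · intro h
    obtain ⟨q₁, hq₁⟩ := hT.isConnected.exists_walk_length_eq_dist v c
    obtain ⟨q₂, hq₂⟩ := hT.isConnected.exists_walk_length_eq_dist c n
    have hlen : (q₁.append q₂).length = T.dist v n := by
      rw [Walk.length_append]; omega
    have hpath := (q₁.append q₂).isPath_of_length_eq_dist hlen
    have ppath := p.isPath_of_length_eq_dist hp
    obtain ⟨w, -, hw⟩ := hT.existsUnique_path v n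
    have heq := (hw _ ppath).trans (hw _ hpath).symm
    rw [heq, Walk.support_append]
    exact List.mem_append_left _ q₁.end_mem_support
  · intro h
    classical
    have h1 : T.dist v c ≤ (p.takeUntil c h).length := T.dist_le _
    have h2 : T.dist c n ≤ (p.dropUntil c h).length := T.dist_le _
    have h3 : (p.takeUntil c h).length + (p.dropUntil c h).length = p.length := by
      rw [← Walk.length_append, Walk.take_spec]
    have h4 := hT.isConnected.dist_triangle (u := v) (v := c) (w := n)
    omega

lemma descend {V : Type} (T : SimpleGraph V) (hT : T.IsTree) {n w w' : V}
    (h : T.Adj w w') (hd : T.dist w n + 1 = T.dist w' n) (c : V) :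
    T.dist w' c + T.dist c n = T.dist w' n ↔ (c = w' ∨ T.dist w c + T.dist c n = T.dist w n) := by
  obtain ⟨p, hp, hl⟩ := hT.isConnected.exists_path_of_dist w n
  have key := onP_iff_mem T hT (Walk.cons h.symm p) (by rw [Walk.length_cons]; omega) c
  rw [key, Walk.support_cons, List.mem_cons, ← onP_iff_mem T hT p hl c]

lemma erase_parent_child {V : Type} [Fintype V] [DecidableEq V] (T : SimpleGraph V) [DecidableRel T.Adj]
    (hT : T.IsTree) {P : Set V} (hbip : ∀ u v, T.Adj u v → (u ∈ P ↔ v ∉ P)) {n : V}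
    (hn : n ∈ P) {q u : V} (huadj : T.Adj u q) (hud : T.dist u n + 1 = T.dist q n)
    {w : V} (hw : w ∈ (T.neighborFinset q).erase u) :
    T.Adj q w ∧ T.dist q n + 1 = T.dist w n := by
  classical
  obtain ⟨hwu, hw'⟩ := Finset.mem_erase.mp hw
  have hqw : T.Adj q w := (T.mem_neighborFinset q w).mp hw'
  rcases adj_dist T hT.isConnected hbip hn hqw with h | h
  · exact ⟨hqw, h⟩
  · exact absurd (parent_unique T hT hqw.symm h huadj hud) hwu

lemma not_onP_of_dist_gt {V : Type} (T : SimpleGraph V) {n c v : V}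
    (h : T.dist v n < T.dist c n) : ¬ (T.dist v c + T.dist c n = T.dist v n) := by omega

lemma key_check {V : Type} [Fintype V] [DecidableEq V] (T : SimpleGraph V) [DecidableRel T.Adj]
    (hT : T.IsTree) {P : Set V} (hbip : ∀ u v, T.Adj u v → (u ∈ P ↔ v ∉ P)) {n : V}
    (hn : n ∈ P) {x : V → ZMod 2} (hx0 : ∀ v, v ∉ P → x v = 0)
    (hxs : ∀ q, q ∉ P → ∑ p ∈ T.neighborFinset q, x p = 0)
    (hxn : x n = 1)
    (hmin : ∀ y, IsCodeword T P y → Covers P x y → y ≠ 0 → y = x)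
    {q : V} (hq : q ∉ P) (hex : ∃ p, T.Adj q p ∧ x p = 1)
    {u : V} (hu : T.Adj u q) (hud : T.dist u n + 1 = T.dist q n) :
    x u = 1 ∧ ∃ c, T.Adj q c ∧ T.dist q n + 1 = T.dist c n ∧ x c = 1 ∧
      (∀ c', T.Adj q c' → x c' = 1 → c' ≠ u → c' = c) := by
  classical
  have hc := hT.isConnected
  have hx1 : ∀ v : V, x v = 0 ∨ x v = 1 := fun v => zmod2_cases (x v)
  have memP : ∀ v, x v = 1 → v ∈ P := by
    intro v h
    by_contra hv
    rw [hx0 v hv] at h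
    exact absurd h (by decide)
  have hsum := hxs q hq
  have huN : u ∈ T.neighborFinset q := (T.mem_neighborFinset q u).mpr hu.symm
  set S := ((T.neighborFinset q).erase u).filter (fun w => x w = 1) with hS
  rw [← Finset.add_sum_erase _ x huN] at hsum
  have herase : ∑ w ∈ (T.neighborFinset q).erase u, x w = (S.card : ZMod 2) := by
    have h1 : ∑ w ∈ (T.neighborFinset q).erase u, x w
        = ∑ w ∈ (T.neighborFinset q).erase u, (if x w = 1 then (1 : ZMod 2) else 0) := by
      refine Finset.sum_congr rfl fun w _ => ?_
      rcases hx1 w with h | h <;> rw [h]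
      · rw [if_neg (by decide)]
      · rw [if_pos rfl]
    rw [h1, Finset.sum_boole, hS]
  have hchild : ∀ w ∈ (T.neighborFinset q).erase u, T.Adj q w ∧ T.dist q n + 1 = T.dist w n :=
    fun w hw => erase_parent_child T hT hbip hn hu hud hw
  have hcard : S.card ≤ 1 := by
    by_contra hgt
    push_neg at hgt
    obtain ⟨c₁, hc₁, c₂, hc₂, hne⟩ := Finset.one_lt_card.mp hgt
    rw [hS, Finset.mem_filter] at hc₁ hc₂
    obtain ⟨hc₁e, hxc₁⟩ := hc₁
    obtain ⟨hc₂e, hxc₂⟩ := hc₂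
    obtain ⟨hqc₁, hdc₁⟩ := hchild c₁ hc₁e
    obtain ⟨hqc₂, hdc₂⟩ := hchild c₂ hc₂e
    have hkey1 : ∀ c, T.dist q n + 1 = T.dist c n → ∀ w, T.Adj q w → T.dist q n + 1 = T.dist w n →
        ((T.dist w c + T.dist c n = T.dist w n) ↔ w = c) := by
      intro c hdc w hqw hdw
      rw [descend T hT hqw hdw c]
      constructor
      · rintro (rfl | h)
        · rfl
        · exact absurd h (by omega)
      · rintro rfl
        exact Or.inl rfl
    set y : V → ZMod 2 := fun w =>
      if T.dist w c₁ + T.dist c₁ n = T.dist w n ∨ T.dist w c₂ + T.dist c₂ n = T.dist w n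
      then 0 else x w with hy
    have hyeval : ∀ w, y w =
        if T.dist w c₁ + T.dist c₁ n = T.dist w n ∨ T.dist w c₂ + T.dist c₂ n = T.dist w n
        then 0 else x w := fun w => by rw [hy]
    have hycode : IsCodeword T P y := by
      constructor
      · intro v hv
        rw [hyeval]
        split
        · rfl
        · exact hx0 v hv
      · intro q' hq'
        by_cases hqq : q' = q
        · subst hqq
          have hcong : ∀ w ∈ T.neighborFinset q', y w = if w = c₁ ∨ w = c₂ then 0 else x w := by
            intro w hwN
            rw [hyeval]
            by_cases hwu : w = u
            · subst hwu
              have hA : ¬(T.dist w c₁ + T.dist c₁ n = T.dist w n ∨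
                  T.dist w c₂ + T.dist c₂ n = T.dist w n) := by
                rintro (h | h) <;> omega
              have hB : ¬(w = c₁ ∨ w = c₂) := by
                rintro (rfl | rfl) <;> omega
              rw [if_neg hA, if_neg hB]
            · have hwO := hchild w (Finset.mem_erase.mpr ⟨hwu, hwN⟩)
              have i₁ := hkey1 c₁ hdc₁ w hwO.1 hwO.2
              have i₂ := hkey1 c₂ hdc₂ w hwO.1 hwO.2
              rw [if_congr (or_congr i₁ i₂) rfl rfl]
          rw [Finset.sum_congr rfl hcong]
          have hc₁N : c₁ ∈ T.neighborFinset q' := (Finset.mem_erase.mp hc₁e).2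
          have hc₂E : c₂ ∈ (T.neighborFinset q').erase c₁ :=
            Finset.mem_erase.mpr ⟨Ne.symm hne, (Finset.mem_erase.mp hc₂e).2⟩
          have hsum0 := hxs q' hq'
          rw [← Finset.add_sum_erase _ x hc₁N, ← Finset.add_sum_erase _ x hc₂E] at hsum0
          rw [← Finset.add_sum_erase _ _ hc₁N, ← Finset.add_sum_erase _ _ hc₂E]
          rw [if_pos (Or.inl rfl), if_pos (Or.inr rfl)]
          have hee : ∑ w ∈ ((T.neighborFinset q').erase c₁).erase c₂,
              (if w = c₁ ∨ w = c₂ then (0 : ZMod 2) else x w)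
              = ∑ w ∈ ((T.neighborFinset q').erase c₁).erase c₂, x w := by
            refine Finset.sum_congr rfl fun w hw => ?_
            obtain ⟨hw2, hw1'⟩ := Finset.mem_erase.mp hw
            obtain ⟨hw1, _⟩ := Finset.mem_erase.mp hw1'
            rw [if_neg]
            rintro (rfl | rfl)
            · exact hw1 rfl
            · exact hw2 rfl
          rw [hee]
          rw [hxc₁, hxc₂] at hsum0
          rcases zmod2_cases (∑ w ∈ ((T.neighborFinset q').erase c₁).erase c₂, x w) with h | h <;>
            rw [h] at hsum0 ⊢
          · decide
          · exact absurd hsum0 (by decide)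
        · by_cases hD : (T.dist q' c₁ + T.dist c₁ n = T.dist q' n ∨
              T.dist q' c₂ + T.dist c₂ n = T.dist q' n)
          · refine Finset.sum_eq_zero fun w hwN => ?_
            have hq'w : T.Adj q' w := (T.mem_neighborFinset q' w).mp hwN
            rw [hyeval]
            rw [if_pos]
            rcases adj_dist T hc hbip hn hq'w with hcw | hpw
            · rcases hD with h | h
              · exact Or.inl ((descend T hT hq'w hcw c₁).mpr (Or.inr h))
              · exact Or.inr ((descend T hT hq'w hcw c₂).mpr (Or.inr h))
            · rcases hD with h | h
              · refine Or.inl ?_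
                rcases (descend T hT hq'w.symm hpw c₁).mp h with rfl | h'
                · exact absurd (memP _ hxc₁) hq'
                · exact h'
              · refine Or.inr ?_
                rcases (descend T hT hq'w.symm hpw c₂).mp h with rfl | h'
                · exact absurd (memP _ hxc₂) hq'
                · exact h'
          · push_neg at hD
            have hyx : ∀ w ∈ T.neighborFinset q', y w = x w := by
              intro w hwN
              have hq'w : T.Adj q' w := (T.mem_neighborFinset q' w).mp hwN
              have hno : ∀ c, T.dist q n + 1 = T.dist c n → T.Adj q c →
                  ¬(T.dist q' c + T.dist c n = T.dist q' n) →
                  ¬(T.dist w c + T.dist c n = T.dist w n) := by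
                intro c hdc hqc hnc h
                rcases adj_dist T hc hbip hn hq'w with hcw | hpw
                · rcases (descend T hT hq'w hcw c).mp h with rfl | h'
                  · exact hqq (parent_unique T hT hq'w hcw hqc hdc)
                  · exact hnc h'
                · exact hnc ((descend T hT hq'w.symm hpw c).mpr (Or.inr h))
              rw [hyeval, if_neg]
              rintro (h | h)
              · exact hno c₁ hdc₁ hqc₁ hD.1 h
              · exact hno c₂ hdc₂ hqc₂ hD.2 h
            rw [Finset.sum_congr rfl hyx]
            exact hxs q' hq'
    have hycov : Covers P x y := by
      intro p hp hyp
      rw [hyeval] at hyp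
      split at hyp
      · exact absurd hyp (by decide)
      · exact hyp
    have hyne : y ≠ 0 := by
      intro h0
      have h1 : y n = 0 := by rw [h0]; rfl
      rw [hyeval, if_neg] at h1
      · rw [hxn] at h1; exact absurd h1 (by decide)
      · have hdn : T.dist n n = 0 := T.dist_self
        rintro (h | h) <;> omega
    have heq := hmin y hycode hycov hyne
    have hyc₁ : y c₁ = x c₁ := by rw [heq]
    have hself : T.dist c₁ c₁ = 0 := T.dist_self
    rw [hyeval, if_pos (Or.inl (by omega))] at hyc₁
    rw [hxc₁] at hyc₁
    exact absurd hyc₁ (by decide)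
  obtain ⟨p, hpq, hxp⟩ := hex
  have hpN : p ∈ T.neighborFinset q := (T.mem_neighborFinset q p).mpr hpq
  have hcast0 : ((0 : ℕ) : ZMod 2) = 0 := by norm_num
  have hcast1 : ((1 : ℕ) : ZMod 2) = 1 := by norm_num
  have hxu1 : x u = 1 ∧ S.card = 1 := by
    by_cases hpu : p = u
    · subst hpu
      refine ⟨hxp, ?_⟩
      rcases Nat.le_one_iff_eq_zero_or_eq_one.mp hcard with h | h
      · rw [h] at herase
        rw [herase, hxp, hcast0] at hsum
        exact absurd hsum (by decide)
      · exact h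
    · have hpS : p ∈ S := by
        rw [hS, Finset.mem_filter]
        exact ⟨Finset.mem_erase.mpr ⟨hpu, hpN⟩, hxp⟩
      have h1 : S.card = 1 := le_antisymm hcard (Finset.card_pos.mpr ⟨p, hpS⟩)
      refine ⟨?_, h1⟩
      rw [herase, h1, hcast1] at hsum
      rcases hx1 u with h | h
      · rw [h] at hsum; exact absurd hsum (by decide)
      · exact h
  obtain ⟨hxu, hScard⟩ := hxu1
  obtain ⟨c, hcc⟩ := Finset.card_eq_one.mp hScard
  have hcS : c ∈ S := hcc ▸ Finset.mem_singleton_self c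
  rw [hS, Finset.mem_filter] at hcS
  obtain ⟨hcE, hxc⟩ := hcS
  obtain ⟨hqc, hdc⟩ := hchild c hcE
  refine ⟨hxu, c, hqc, hdc, hxc, ?_⟩
  intro c' hqc' hxc' hc'u
  have hmem : c' ∈ S := by
    rw [hS, Finset.mem_filter]
    exact ⟨Finset.mem_erase.mpr ⟨hc'u, (T.mem_neighborFinset q c').mpr hqc'⟩, hxc'⟩
  rw [hcc] at hmem
  exact Finset.mem_singleton.mp hmem

/-- a set `X` of vertices of `T` is the support of some minimal deviation
of `T` if and only if: (i) `n ∈ X`; (ii) every vertex of `X` other than `n` has its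
parent in `X`; (iii) every variable node of `X` has all of its child check nodes in
`X`; (iv) every check node of `X` has exactly one of its child variable nodes in `X`. -/
theorem support_eq_iff_minimal_subtree {V : Type} [Fintype V]
    (T : SimpleGraph V) [DecidableRel T.Adj] (hT : T.IsTree)
    (P : Set V) (hbip : ∀ u v, T.Adj u v → (u ∈ P ↔ v ∉ P))
    (n : V) (hn : n ∈ P) (X : Set V) :
    (∃ x, IsMinimalDeviation T P n x ∧ Support T P x = X) ↔
      (n ∈ X ∧
       (∀ v ∈ X, v ≠ n → ∀ u, IsChild T n u v → u ∈ X) ∧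
       (∀ p ∈ X, p ∈ P → ∀ q, IsChild T n p q → q ∉ P → q ∈ X) ∧
       (∀ q ∈ X, q ∉ P → ∃! p, IsChild T n q p ∧ p ∈ P ∧ p ∈ X)) := by
  classical
  have hc := hT.isConnected
  constructor
  · rintro ⟨x, ⟨⟨hx0, hxs⟩, hxn, hmin⟩, rfl⟩
    have memP : ∀ v, x v = 1 → v ∈ P := by
      intro v h; by_contra hv; rw [hx0 v hv] at h; exact absurd h (by decide)
    simp only [Support, Set.mem_setOf_eq]
    refine ⟨Or.inl ⟨hn, hxn⟩, ?_, ?_, ?_⟩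
    · -- (ii)
      rintro v hv hvn u ⟨huv, hdv⟩
      rcases hv with ⟨hvP, hxv⟩ | ⟨hvP, p, hpP, hadj, hxp⟩
      · exact Or.inr ⟨fun huP => (hbip u v huv).mp huP hvP, v, hvP, huv, hxv⟩
      · have huP : u ∈ P := by
          have := hbip u v huv; tauto
        have hk := key_check T hT hbip hn hx0 hxs hxn hmin hvP ⟨p, hadj, hxp⟩ huv (by omega)
        exact Or.inl ⟨huP, hk.1⟩
    · -- (iii)
      rintro p hp hpP q ⟨hpq, hdq⟩ hqP
      have hxp : x p = 1 := by
        rcases hp with ⟨_, h⟩ | ⟨h, _⟩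
        · exact h
        · exact absurd hpP h
      exact Or.inr ⟨hqP, p, hpP, hpq.symm, hxp⟩
    · -- (iv)
      rintro q hq hqP
      have hex : ∃ p, T.Adj q p ∧ x p = 1 := by
        rcases hq with ⟨h, _⟩ | ⟨_, p, hpP, hadj, hxp⟩
        · exact absurd h hqP
        · exact ⟨p, hadj, hxp⟩
      have hqn : q ≠ n := fun e => hqP (e ▸ hn)
      obtain ⟨u, huadj, hud⟩ := exists_parent T hc hqn
      obtain ⟨hxu, c, hcadj, hcd, hxc, hcuniq⟩ :=
        key_check T hT hbip hn hx0 hxs hxn hmin hqP hex huadj hud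
      have hcP : c ∈ P := memP c hxc
      refine ⟨c, ⟨⟨hcadj, by omega⟩, hcP, Or.inl ⟨hcP, hxc⟩⟩, ?_⟩
      rintro p' ⟨⟨hadj', hd'⟩, hp'P, hp'X⟩
      have hxp' : x p' = 1 := by
        rcases hp'X with ⟨_, h⟩ | ⟨h, _⟩
        · exact h
        · exact absurd hp'P h
      have hp'u : p' ≠ u := by
        intro e; rw [e] at hd'; omega
      exact hcuniq p' hadj' hxp' hp'u
  · rintro ⟨h1, h2, h3, h4⟩
    set x : V → ZMod 2 := fun v => if v ∈ X ∧ v ∈ P then 1 else 0 with hxdef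
    have hx1 : ∀ v, x v = 1 ↔ (v ∈ X ∧ v ∈ P) := by
      intro v
      constructor
      · intro hh
        by_contra h
        simp only [hxdef] at hh
        rw [if_neg h] at hh
        exact absurd hh (by decide)
      · intro h
        simp only [hxdef]
        rw [if_pos h]
    have hx0' : ∀ v, x v = 0 ∨ x v = 1 := fun v => zmod2_cases (x v)
    have hxoff : ∀ v, v ∉ P → x v = 0 := by
      intro v hv
      simp only [hxdef]
      rw [if_neg (fun h => hv h.2)]
    have hxn1 : x n = 1 := (hx1 n).mpr ⟨h1, hn⟩
    have hdn : T.dist n n = 0 := T.dist_self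
    have hxs : ∀ q, q ∉ P → ∑ w ∈ T.neighborFinset q, x w = 0 := by
      intro q hqP
      have hqn : q ≠ n := fun e => hqP (e ▸ hn)
      obtain ⟨u, huadj, hud⟩ := exists_parent T hc hqn
      have huP : u ∈ P := (hbip u q huadj).mpr hqP
      by_cases hqX : q ∈ X
      · have huX : u ∈ X := h2 q hqX hqn u ⟨huadj, by omega⟩
        obtain ⟨c, ⟨⟨hcadj, hcd⟩, hcP, hcX⟩, hcu⟩ := h4 q hqX hqP
        have huN : u ∈ T.neighborFinset q := (T.mem_neighborFinset q u).mpr huadj.symm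
        have hcE : c ∈ (T.neighborFinset q).erase u :=
          Finset.mem_erase.mpr ⟨fun e => by rw [e] at hcd; omega,
            (T.mem_neighborFinset q c).mpr hcadj⟩
        rw [← Finset.add_sum_erase _ x huN, ← Finset.add_sum_erase _ x hcE]
        have hrest : ∀ w ∈ ((T.neighborFinset q).erase u).erase c, x w = 0 := by
          intro w hw
          obtain ⟨hwc, hw'⟩ := Finset.mem_erase.mp hw
          obtain ⟨hqw, hdw⟩ := erase_parent_child T hT hbip hn huadj hud hw'
          rcases hx0' w with h | h
          · exact h
          · obtain ⟨hwX, hwP⟩ := (hx1 w).mp h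
            exact absurd (hcu w ⟨⟨hqw, by omega⟩, hwP, hwX⟩) hwc
        rw [Finset.sum_eq_zero hrest, add_zero,
          (hx1 u).mpr ⟨huX, huP⟩, (hx1 c).mpr ⟨hcX, hcP⟩]
        decide
      · refine Finset.sum_eq_zero fun w hwN => ?_
        have hqw : T.Adj q w := (T.mem_neighborFinset q w).mp hwN
        rcases hx0' w with h | h
        · exact h
        · exfalso
          obtain ⟨hwX, hwP⟩ := (hx1 w).mp h
          rcases adj_dist T hc hbip hn hqw with hcw | hpw
          · have hwn : w ≠ n := by intro e; rw [e] at hcw; omega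
            exact hqX (h2 w hwX hwn q ⟨hqw, by omega⟩)
          · exact hqX (h3 w hwX hwP q ⟨hqw.symm, by omega⟩ hqP)
    have hmin : ∀ y, IsCodeword T P y → Covers P x y → y ≠ 0 → y = x := by
      rintro y ⟨hy0, hys⟩ hcov hyne
      have hy1 : ∀ v, y v = 0 ∨ y v = 1 := fun v => zmod2_cases (y v)
      have hyXP : ∀ v, y v = 1 → v ∈ X ∧ v ∈ P := by
        intro v h
        have hvP : v ∈ P := by
          by_contra hv; rw [hy0 v hv] at h; exact absurd h (by decide)
        exact ⟨((hx1 v).mp (hcov v hvP h)).1, hvP⟩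
      have step : ∀ p, p ∈ P → p ∈ X → p ≠ n →
          ∃ u, u ∈ P ∧ u ∈ X ∧ T.dist u n + 2 = T.dist p n ∧ y u = y p := by
        intro p hpP hpX hpn
        obtain ⟨q, hqadj, hqd⟩ := exists_parent T hc hpn
        have hqP : q ∉ P := fun hqp => (hbip q p hqadj).mp hqp hpP
        have hqX : q ∈ X := h2 p hpX hpn q ⟨hqadj, by omega⟩
        have hqn : q ≠ n := fun e => hqP (e ▸ hn)
        obtain ⟨u, huadj, hud⟩ := exists_parent T hc hqn
        have huX : u ∈ X := h2 q hqX hqn u ⟨huadj, by omega⟩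
        have huP : u ∈ P := (hbip u q huadj).mpr hqP
        obtain ⟨c, hcprop, hcu⟩ := h4 q hqX hqP
        have hpc : p = c := hcu p ⟨⟨hqadj, by omega⟩, hpP, hpX⟩
        have huN : u ∈ T.neighborFinset q := (T.mem_neighborFinset q u).mpr huadj.symm
        have hpE : p ∈ (T.neighborFinset q).erase u :=
          Finset.mem_erase.mpr ⟨fun e => by rw [e] at hqd; omega,
            (T.mem_neighborFinset q p).mpr hqadj⟩
        have hsum := hys q hqP
        rw [← Finset.add_sum_erase _ y huN, ← Finset.add_sum_erase _ y hpE] at hsum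
        have hrest : ∀ w ∈ ((T.neighborFinset q).erase u).erase p, y w = 0 := by
          intro w hw
          obtain ⟨hwp, hw'⟩ := Finset.mem_erase.mp hw
          obtain ⟨hqw, hdw⟩ := erase_parent_child T hT hbip hn huadj hud hw'
          rcases hy1 w with h | h
          · exact h
          · exfalso
            obtain ⟨hwX, hwP⟩ := hyXP w h
            have hwc := hcu w ⟨⟨hqw, by omega⟩, hwP, hwX⟩
            exact hwp (hwc.trans hpc.symm)
        rw [Finset.sum_eq_zero hrest, add_zero] at hsum
        have hyup : y u = y p := by
          rcases hy1 u with h | h <;> rcases hy1 p with h' | h' <;>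
            rw [h, h'] at hsum ⊢ <;> first | rfl | (exact absurd hsum (by decide))
        exact ⟨u, huP, huX, by omega, hyup⟩
      have hAn : y n = 1 := by
        have hex : ∃ p, y p = 1 := by
          by_contra h
          push_neg at h
          apply hyne
          funext v
          rcases hy1 v with h0 | h0
          · exact h0
          · exact absurd h0 (h v)
        obtain ⟨p₀, hp₀⟩ := hex
        suffices H : ∀ k p, T.dist p n = k → y p = 1 → y n = 1 from H _ p₀ rfl hp₀
        intro k
        induction k using Nat.strong_induction_on with
        | _ k IH =>
          intro p hk hyp
          by_cases hpn : p = n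
          · rw [← hpn]; exact hyp
          · obtain ⟨hpX, hpP⟩ := hyXP p hyp
            obtain ⟨u, huP, huX, hud, hyu⟩ := step p hpP hpX hpn
            exact IH (T.dist u n) (by omega) u rfl (hyu.trans hyp)
      have hB : ∀ p, p ∈ P → p ∈ X → y p = 1 := by
        suffices H : ∀ k p, T.dist p n = k → p ∈ P → p ∈ X → y p = 1 from
          fun p hp hx' => H _ p rfl hp hx'
        intro k
        induction k using Nat.strong_induction_on with
        | _ k IH =>
          intro p hk hpP hpX
          by_cases hpn : p = n
          · rw [hpn]; exact hAn
          · obtain ⟨u, huP, huX, hud, hyu⟩ := step p hpP hpX hpn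
            rw [← hyu]
            exact IH (T.dist u n) (by omega) u rfl huP huX
      funext v
      rcases hy1 v with h0 | h0
      · rw [h0]
        rcases hx0' v with h | h
        · rw [h]
        · exfalso
          obtain ⟨hvX, hvP⟩ := (hx1 v).mp h
          rw [hB v hvP hvX] at h0
          exact absurd h0 (by decide)
      · rw [h0]
        obtain ⟨hvX, hvP⟩ := hyXP v h0
        exact ((hx1 v).mpr ⟨hvX, hvP⟩).symm
    refine ⟨x, ⟨⟨hxoff, hxs⟩, hxn1, hmin⟩, ?_⟩
    ext v
    simp only [Support, Set.mem_setOf_eq]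
    constructor
    · rintro (⟨hvP, hxv⟩ | ⟨hvP, p, hpP, hadj, hxp⟩)
      · exact ((hx1 v).mp hxv).1
      · obtain ⟨hpX, _⟩ := (hx1 p).mp hxp
        rcases adj_dist T hc hbip hn hadj with hcw | hpw
        · have hpn : p ≠ n := by intro e; rw [e] at hcw; omega
          exact h2 p hpX hpn v ⟨hadj, by omega⟩
        · exact h3 p hpX hpP v ⟨hadj.symm, by omega⟩ hvP
    · intro hvX
      by_cases hvP : v ∈ P
      · exact Or.inl ⟨hvP, (hx1 v).mpr ⟨hvX, hvP⟩⟩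
      · have hvn : v ≠ n := fun e => hvP (e ▸ hn)
        obtain ⟨u, huadj, hud⟩ := exists_parent T hc hvn
        have huP : u ∈ P := (hbip u v huadj).mpr hvP
        have huX : u ∈ X := h2 v hvX hvn u ⟨huadj, by omega⟩
        exact Or.inr ⟨hvP, u, huP, huadj.symm, (hx1 u).mpr ⟨huX, huP⟩⟩
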